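/- Let p be a prime, D ≅ C_{p^2} × C_p × C_p, and T ≤ Aut(D) a p'-group. With the equivalence x ~ y iff ∃ t ∈ T, k ∈ ℤ with t(x) = y^{1+kp}, let d_1 (resp. d_2) be the number of equivalence classes of elements of order p (resp. p^2). Then d_1 > d_2. -/

import Mathlib

open MulAction

namespace Stmt4Aux

variable (p : ℕ)

abbrev DD := Multiplicative (ZMod (p ^ 2) × ZMod p × ZMod p)

theorem exp_p2 (x : DD p) : x ^ (p ^ 2) = 1 := by
  have h : (p ^ 2 : ℕ) • x.toAdd = 0 := by
    obtain ⟨a, b, c⟩ := x.toAdd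
    have h1 : (p ^ 2 : ℕ) • a = 0 := by rw [nsmul_eq_mul]; simp
    have h2 : (p ^ 2 : ℕ) • b = 0 := by
      rw [nsmul_eq_mul]; push_cast; simp [ZMod.natCast_self]
    have h3 : (p ^ 2 : ℕ) • c = 0 := by
      rw [nsmul_eq_mul]; push_cast; simp [ZMod.natCast_self]
    exact Prod.ext h1 (Prod.ext h2 h3)
  rw [← toAdd_pow] at h
  exact Multiplicative.toAdd.injective (by simpa using h)

theorem zpow_p2 (x : DD p) : x ^ ((p : ℤ) ^ 2) = 1 := by
  have := exp_p2 p x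
  rw [← zpow_natCast] at this
  push_cast at this
  exact this

theorem zpow_reduce (x : DD p) (a c : ℤ) : x ^ (a + (p : ℤ) ^ 2 * c) = x ^ a := by
  rw [zpow_add, zpow_mul, zpow_p2, one_zpow, mul_one]

def Om : Subgroup (DD p) := (powMonoidHom p : DD p →* DD p).ker

def V : Subgroup (DD p) := (powMonoidHom p : DD p →* DD p).range

theorem mem_Om {x : DD p} : x ∈ Om p ↔ x ^ p = 1 := Iff.rfl

theorem mem_V {x : DD p} : x ∈ V p ↔ ∃ z : DD p, z ^ p = x := by
  simp [V, MonoidHom.mem_range, powMonoidHom_apply]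

theorem apply_mem_Om (t : MulAut (DD p)) {x : DD p} (hx : x ∈ Om p) : t x ∈ Om p := by
  rw [mem_Om] at hx ⊢
  rw [← map_pow, hx, map_one]

theorem apply_mem_V (t : MulAut (DD p)) {x : DD p} (hx : x ∈ V p) : t x ∈ V p := by
  rw [mem_V] at hx ⊢
  obtain ⟨z, hz⟩ := hx
  exact ⟨t z, by rw [← map_pow, hz]⟩

theorem map_V (t : MulAut (DD p)) : (V p).map t.toMonoidHom = V p := by
  ext y
  constructor
  · rintro ⟨x, hx, rfl⟩
    exact apply_mem_V p t hx
  · intro hy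
    exact ⟨t⁻¹ y, apply_mem_V p t⁻¹ hy, t.apply_symm_apply y⟩

theorem V_le_Om : V p ≤ Om p := by
  intro x hx
  rw [mem_V] at hx
  obtain ⟨z, rfl⟩ := hx
  rw [mem_Om, ← pow_mul, ← pow_two, exp_p2]

abbrev Qt := DD p ⧸ V p

def qAut (t : MulAut (DD p)) : MulAut (Qt p) := QuotientGroup.congr (V p) (V p) t (map_V p t)

theorem qAut_mk (t : MulAut (DD p)) (x : DD p) :
    qAut p t (QuotientGroup.mk x) = QuotientGroup.mk (t x) := rfl

theorem qAut_one (q : Qt p) : qAut p 1 q = q := by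
  induction q using QuotientGroup.induction_on
  rfl

theorem qAut_mul (s t : MulAut (DD p)) (q : Qt p) :
    qAut p (s * t) q = qAut p s (qAut p t q) := by
  induction q using QuotientGroup.induction_on
  rfl

theorem qAut_inv_apply (t : MulAut (DD p)) (q : Qt p) : qAut p t⁻¹ (qAut p t q) = q := by
  rw [← qAut_mul, inv_mul_cancel, qAut_one]

section withT

variable (T : Subgroup (MulAut (DD p)))

def cls (x : DD p) : Set (DD p) :=
  {z | ∃ t ∈ T, ∃ k : ℤ, t z = x ^ ((1 : ℤ) + k * p)}

theorem self_mem_cls (x : DD p) : x ∈ cls p T x :=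
  ⟨1, T.one_mem, 0, by simp⟩

theorem cls_eq {t : MulAut (DD p)} (ht : t ∈ T) (k : ℤ) {x y : DD p}
    (h : t y = x ^ ((1 : ℤ) + k * p)) : cls p T x = cls p T y := by
  ext z
  constructor
  · rintro ⟨s, hs, j, hsz⟩
    refine ⟨t⁻¹ * s, mul_mem (inv_mem ht) hs, j - k, ?_⟩
    have key : x ^ ((1 : ℤ) + j * p) = t (y ^ ((1 : ℤ) + (j - k) * p)) := by
      rw [map_zpow, h, ← zpow_mul]
      have he : ((1 : ℤ) + k * p) * ((1 : ℤ) + (j - k) * p)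
          = ((1 : ℤ) + j * p) + (p : ℤ) ^ 2 * (k * (j - k)) := by ring
      rw [he, zpow_reduce]
    rw [MulAut.mul_apply, hsz, key]
    exact t.symm_apply_apply _
  · rintro ⟨s, hs, j, hsz⟩
    refine ⟨t * s, mul_mem ht hs, k + j + k * j * p, ?_⟩
    rw [MulAut.mul_apply, hsz, map_zpow, h, ← zpow_mul]
    have he : ((1 : ℤ) + k * p) * ((1 : ℤ) + j * p)
        = ((1 : ℤ) + (k + j + k * j * p) * p) := by ring
    rw [he]

theorem cls_of_mem_Om {x : DD p} (hx : x ∈ Om p) :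
    cls p T x = {z | ∃ t ∈ T, t z = x} := by
  have hpow : ∀ k : ℤ, x ^ ((1 : ℤ) + k * p) = x := by
    intro k
    rw [zpow_add, zpow_one, mul_comm k (p : ℤ), zpow_mul, zpow_natCast,
      (mem_Om p).mp hx, one_zpow, mul_one]
  ext z
  constructor
  · rintro ⟨t, ht, k, htz⟩
    exact ⟨t, ht, by rw [htz, hpow]⟩
  · rintro ⟨t, ht, htz⟩
    exact ⟨t, ht, 0, by rw [htz, hpow]⟩

end withT

theorem ord_p_iff (hp : p.Prime) (x : DD p) :
    orderOf x = p ↔ x ∈ Om p ∧ x ≠ 1 := by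
  rw [mem_Om]
  constructor
  · intro h
    have hx := pow_orderOf_eq_one x
    rw [h] at hx
    refine ⟨hx, ?_⟩
    rintro rfl
    rw [orderOf_one] at h
    exact hp.one_lt.ne' h.symm
  · rintro ⟨h1, h2⟩
    haveI := Fact.mk hp
    exact orderOf_eq_prime h1 h2

theorem ord_p2_iff (hp : p.Prime) (x : DD p) :
    orderOf x = p ^ 2 ↔ x ∉ Om p := by
  rw [mem_Om]
  constructor
  · intro h hx
    have hd : orderOf x ∣ p := orderOf_dvd_of_pow_eq_one hx
    rw [h] at hd
    have := Nat.le_of_dvd hp.pos hd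
    nlinarith [hp.two_le]
  · intro hx
    have hd : orderOf x ∣ p ^ 2 := orderOf_dvd_of_pow_eq_one (exp_p2 p x)
    obtain ⟨i, hi, hoi⟩ := (Nat.dvd_prime_pow hp).mp hd
    interval_cases i
    · rw [pow_zero, orderOf_eq_one_iff] at hoi
      exact absurd (by rw [hoi, one_pow]) hx
    · rw [pow_one] at hoi
      have := pow_orderOf_eq_one x
      rw [hoi] at this
      exact absurd this hx
    · exact hoi

theorem smul_zmodp_eq_zero (b : ZMod p) : p • b = 0 := by
  rw [nsmul_eq_mul, ZMod.natCast_self, zero_mul]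

theorem pow_p_toAdd (x : DD p) : (x ^ p).toAdd
    = (p • x.toAdd.1, 0, 0) := by
  rw [toAdd_pow]
  obtain ⟨a, b, c⟩ := x.toAdd
  exact Prod.ext rfl (Prod.ext (smul_zmodp_eq_zero p b) (smul_zmodp_eq_zero p c))

theorem not_mem_Om_iff (x : DD p) : x ∉ Om p ↔ p • x.toAdd.1 ≠ 0 := by
  rw [mem_Om, not_iff_not]
  constructor
  · intro h
    have := congrArg Multiplicative.toAdd h
    rw [pow_p_toAdd] at this
    exact congrArg Prod.fst this
  · intro h
    apply Multiplicative.toAdd.injective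
    rw [pow_p_toAdd, h]
    rfl

theorem mem_V_snd {v : DD p} (hv : v ∈ V p) : v.toAdd.2.1 = 0 := by
  obtain ⟨z, hz⟩ := (mem_V p).mp hv
  have := congrArg Multiplicative.toAdd hz
  rw [pow_p_toAdd] at this
  rw [← this]

theorem isUnit_aux (hp : p.Prime) (a : ZMod (p ^ 2)) (ha : p • a ≠ 0) : IsUnit a := by
  haveI : NeZero (p ^ 2) := ⟨pow_ne_zero 2 hp.pos.ne'⟩
  have hv : a = ((a.val : ℕ) : ZMod (p ^ 2)) := by rw [ZMod.natCast_val, ZMod.cast_id]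
  have hnd : ¬ p ∣ a.val := by
    rintro ⟨m, hm⟩
    apply ha
    rw [nsmul_eq_mul, hv, hm]
    push_cast
    rw [← mul_assoc, ← pow_two, ← Nat.cast_pow, ZMod.natCast_self, zero_mul]
  rw [hv]
  exact (ZMod.isUnit_iff_coprime a.val (p ^ 2)).mpr
    (Nat.Coprime.pow_right 2 ((hp.coprime_iff_not_dvd.mpr hnd).symm))

theorem isUnit_of_not_mem_Om (hp : p.Prime) {x : DD p} (hx : x ∉ Om p) :
    IsUnit x.toAdd.1 :=
  isUnit_aux p hp _ ((not_mem_Om_iff p x).mp hx)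

theorem V_zpow (hp : p.Prime) {x : DD p} (hx : x ∉ Om p) {v : DD p} (hv : v ∈ V p) :
    ∃ k : ℤ, v = x ^ ((p : ℤ) * k) := by
  haveI : NeZero (p ^ 2) := ⟨pow_ne_zero 2 hp.pos.ne'⟩
  obtain ⟨z, hz⟩ := (mem_V p).mp hv
  obtain ⟨u, hu⟩ := isUnit_of_not_mem_Om p hp hx
  refine ⟨(((z.toAdd.1 * ↑u⁻¹ : ZMod (p ^ 2))).val : ℤ), ?_⟩
  set k := ((z.toAdd.1 * ↑u⁻¹ : ZMod (p ^ 2))).val with hk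
  apply Multiplicative.toAdd.injective
  have h1 : ((p : ℤ) * (k : ℤ)) = (((p * k : ℕ) : ℤ)) := by push_cast; ring
  have hka : (p * k) • x.toAdd.1 = p • z.toAdd.1 := by
    rw [mul_comm p k, mul_nsmul, nsmul_eq_mul (n := k)]
    congr 1
    have hkc : ((k : ℕ) : ZMod (p ^ 2)) = z.toAdd.1 * ↑u⁻¹ := by
      rw [hk, ZMod.natCast_val, ZMod.cast_id]
    rw [hkc, ← hu, mul_assoc]
    simp
  have h2 : (p * k) • x.toAdd.2.1 = 0 := by
    rw [mul_comm p k, mul_nsmul, smul_zmodp_eq_zero]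
  have h3 : (p * k) • x.toAdd.2.2 = 0 := by
    rw [mul_comm p k, mul_nsmul, smul_zmodp_eq_zero]
  have hgoal : (p * k) • x.toAdd = (p • z.toAdd.1, (0 : ZMod p), (0 : ZMod p)) :=
    calc (p * k) • x.toAdd
        = ((p * k) • x.toAdd.1, (p * k) • x.toAdd.2.1, (p * k) • x.toAdd.2.2) := rfl
      _ = (p • z.toAdd.1, (0 : ZMod p), (0 : ZMod p)) := by rw [hka, h2, h3]
  rw [toAdd_zpow, h1, natCast_zsmul, hgoal, ← hz, pow_p_toAdd]

def omega0 : DD p := Multiplicative.ofAdd ((0, 1, 0) : ZMod (p ^ 2) × ZMod p × ZMod p)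

theorem omega0_mem_Om : omega0 p ∈ Om p := by
  rw [mem_Om]
  apply Multiplicative.toAdd.injective
  rw [pow_p_toAdd]
  show ((p • (0 : ZMod (p ^ 2)), (0 : ZMod p), (0 : ZMod p))
    : ZMod (p ^ 2) × ZMod p × ZMod p) = 0
  rw [smul_zero]
  rfl

theorem omega0_not_mem_V (hp : p.Prime) : omega0 p ∉ V p := by
  haveI := Fact.mk hp.one_lt
  intro hv
  have := mem_V_snd p hv
  exact one_ne_zero this

theorem exists_pow_inverse (hp : p.Prime) {m : ℕ} (hm : m.Coprime p) :
    ∃ n : ℕ, ∀ x : DD p, x ^ (m * n) = x := by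
  have hcop : m.Coprime (p ^ 2) := hm.pow_right 2
  have h1 : 1 < p ^ 2 := by nlinarith [hp.two_le]
  obtain ⟨n, -, hn⟩ := Nat.exists_mul_mod_eq_one_of_coprime hcop h1
  refine ⟨n, fun x => ?_⟩
  have hdm := Nat.div_add_mod (m * n) (p ^ 2)
  rw [hn] at hdm
  calc x ^ (m * n) = x ^ (p ^ 2 * (m * n / p ^ 2) + 1) := by rw [hdm]
    _ = (x ^ (p ^ 2)) ^ (m * n / p ^ 2) * x := by rw [pow_add, pow_mul, pow_one]
    _ = x := by rw [exp_p2, one_pow, one_mul]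

theorem avg_spec (t : MulAut (DD p)) {m : ℕ} (hm : t ^ m = 1) (z : DD p) :
    t (∏ i ∈ Finset.range m, (t ^ i) z) = ∏ i ∈ Finset.range m, (t ^ i) z := by
  have h1 : t (∏ i ∈ Finset.range m, (t ^ i) z)
      = ∏ i ∈ Finset.range m, (t ^ (i + 1)) z := by
    rw [map_prod]
    exact Finset.prod_congr rfl fun i _ =>
      ((congrArg (fun s : MulAut (DD p) => s z) (pow_succ' t i)).symm)
  have h2 : (∏ i ∈ Finset.range m, (t ^ (i + 1)) z) * ((t ^ 0) z)
      = (∏ i ∈ Finset.range m, (t ^ i) z) * ((t ^ m) z) := by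
    rw [← Finset.prod_range_succ' (fun i => (t ^ i) z) m, Finset.prod_range_succ]
  rw [hm, pow_zero] at h2
  exact h1.trans (mul_right_cancel h2)

theorem prod_coset (x : DD p) (f : ℕ → DD p) :
    ∀ m : ℕ, (∀ i, i < m → f i * x⁻¹ ∈ V p) →
      (∏ i ∈ Finset.range m, f i) * (x ^ m)⁻¹ ∈ V p := by
  intro m
  induction m with
  | zero => intro _; simpa using (V p).one_mem
  | succ n ih =>
    intro h
    have h1 := ih fun i hi => h i (Nat.lt_succ_of_lt hi)
    have h2 := h n (Nat.lt_succ_self n)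
    have key : (∏ i ∈ Finset.range (n + 1), f i) * (x ^ (n + 1))⁻¹
        = ((∏ i ∈ Finset.range n, f i) * (x ^ n)⁻¹) * (f n * x⁻¹) := by
      have hx1 : (x ^ (n + 1))⁻¹ = (x ^ n)⁻¹ * x⁻¹ :=
        (congrArg Inv.inv (pow_succ x n)).trans (mul_inv _ _)
      rw [Finset.prod_range_succ, hx1, mul_mul_mul_comm]
    rw [key]
    exact mul_mem h1 h2

theorem pow_apply_fix (t : MulAut (DD p)) {x : DD p} (hx : t x = x) :
    ∀ i, (t ^ i) x = x := by
  intro i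
  induction i with
  | zero => rw [pow_zero]; rfl
  | succ j ih =>
    have h : (t ^ (j + 1)) x = (t * t ^ j) x :=
      congrArg (fun s : MulAut (DD p) => s x) (pow_succ' t j)
    rw [h]
    show t ((t ^ j) x) = x
    rw [ih, hx]

theorem avg_A (t : MulAut (DD p)) {n : ℕ} (hmn : ∀ x : DD p, x ^ (orderOf t * n) = x)
    {x : DD p} (hx : t x * x⁻¹ ∈ V p) : ∃ e : DD p, t e = e ∧ e * x⁻¹ ∈ V p := by
  refine ⟨(∏ i ∈ Finset.range (orderOf t), (t ^ i) x) ^ n,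
    by rw [map_pow, avg_spec p t (pow_orderOf_eq_one t) x], ?_⟩
  have hco : ∀ i, (t ^ i) x * x⁻¹ ∈ V p := by
    intro i
    induction i with
    | zero => rw [pow_zero]; show x * x⁻¹ ∈ V p; rw [mul_inv_cancel]; exact (V p).one_mem
    | succ j ih =>
      have key : (t ^ (j + 1)) x * x⁻¹ = t ((t ^ j) x * x⁻¹) * (t x * x⁻¹) := by
        have h : (t ^ (j + 1)) x = (t * t ^ j) x :=
          congrArg (fun s : MulAut (DD p) => s x) (pow_succ' t j)
        rw [h]
        show t ((t ^ j) x) * x⁻¹ = _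
        rw [map_mul, map_inv]
        group
      rw [key]
      exact mul_mem (apply_mem_V p t ih) hx
  have hP := prod_coset p x (fun i => (t ^ i) x) (orderOf t) fun i _ => hco i
  have key : ((∏ i ∈ Finset.range (orderOf t), (t ^ i) x) * (x ^ orderOf t)⁻¹) ^ n
      = (∏ i ∈ Finset.range (orderOf t), (t ^ i) x) ^ n * x⁻¹ := by
    rw [mul_pow, inv_pow, ← pow_mul, hmn]
  rw [← key]
  exact pow_mem hP n

theorem avg_B (t : MulAut (DD p)) {n : ℕ} (hmn : ∀ x : DD p, x ^ (orderOf t * n) = x)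
    {x : DD p} (hfix : t x = x) (hv : x ∈ V p) : ∃ e : DD p, t e = e ∧ e ^ p = x := by
  obtain ⟨z, hz⟩ := (mem_V p).mp hv
  refine ⟨(∏ i ∈ Finset.range (orderOf t), (t ^ i) z) ^ n,
    by rw [map_pow, avg_spec p t (pow_orderOf_eq_one t) z], ?_⟩
  calc ((∏ i ∈ Finset.range (orderOf t), (t ^ i) z) ^ n) ^ p
      = (∏ i ∈ Finset.range (orderOf t), ((t ^ i) z) ^ p) ^ n := by
        rw [← pow_mul, mul_comm n p, pow_mul, ← Finset.prod_pow]
    _ = (x ^ orderOf t) ^ n := by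
        rw [Finset.prod_congr rfl fun i _ => by rw [← map_pow, hz, pow_apply_fix p t hfix i],
          Finset.prod_const, Finset.card_range]
    _ = x := by rw [← pow_mul, hmn]

def fixC (t : MulAut (DD p)) : Subgroup (DD p) where
  carrier := {x | t x = x}
  one_mem' := map_one t
  mul_mem' := fun ha hb => by
    rw [Set.mem_setOf_eq] at ha hb ⊢
    rw [map_mul, ha, hb]
  inv_mem' := fun ha => by
    rw [Set.mem_setOf_eq] at ha ⊢
    rw [map_inv, ha]

theorem core (hp : p.Prime) (t : MulAut (DD p)) (hcop : (orderOf t).Coprime p) :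
    Nat.card {x : DD p // x ∈ Om p ∧ t x = x} = Nat.card {q : Qt p // qAut p t q = q} := by
  haveI : NeZero p := ⟨hp.pos.ne'⟩
  haveI : NeZero (p ^ 2) := ⟨pow_ne_zero 2 hp.pos.ne'⟩
  obtain ⟨n, hmn⟩ := exists_pow_inverse p hp hcop
  set C := fixC p t with hCdef
  have memC : ∀ x : DD p, x ∈ C ↔ t x = x := fun x => Iff.rfl
  set f : C →* Qt p := (QuotientGroup.mk' (V p)).comp (Subgroup.subtype C) with hf
  have hfapp : ∀ x : C, f x = QuotientGroup.mk (x : DD p) := fun x => rfl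
  set g : C →* C := {
    toFun := fun x => ⟨(x : DD p) ^ p, by
      rw [memC, map_pow, (memC _).mp x.2]⟩
    map_one' := Subtype.ext (one_pow p)
    map_mul' := fun a b => Subtype.ext (mul_pow (a : DD p) (b : DD p) p) } with hg
  have e1 : Nat.card C = Nat.card f.range * Nat.card f.ker := by
    rw [Subgroup.card_eq_card_quotient_mul_card_subgroup f.ker]
    congr 1
    exact Nat.card_congr (QuotientGroup.quotientKerEquivRange f).toEquiv
  have e2 : Nat.card C = Nat.card g.range * Nat.card g.ker := by
    rw [Subgroup.card_eq_card_quotient_mul_card_subgroup g.ker]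
    congr 1
    exact Nat.card_congr (QuotientGroup.quotientKerEquivRange g).toEquiv
  have hrg : g.range = f.ker := by
    ext x
    rw [MonoidHom.mem_range, MonoidHom.mem_ker, hfapp, QuotientGroup.eq_one_iff]
    constructor
    · rintro ⟨y, hy⟩
      have : ((y : DD p)) ^ p = (x : DD p) := Subtype.ext_iff.mp hy
      exact (mem_V p).mpr ⟨y, this⟩
    · intro hxV
      obtain ⟨e, he, hep⟩ := avg_B p t hmn ((memC _).mp x.2) hxV
      exact ⟨⟨e, (memC e).mpr he⟩, Subtype.ext hep⟩
  have hkg : Nat.card g.ker = Nat.card {x : DD p // x ∈ Om p ∧ t x = x} := by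
    apply Nat.card_congr
    refine ⟨fun y => ⟨((y : C) : DD p), ?_, (memC _).mp (y : C).2⟩,
      fun x => ⟨⟨x.1, (memC _).mpr x.2.2⟩, ?_⟩, fun y => ?_, fun x => ?_⟩
    · rw [mem_Om]
      exact Subtype.ext_iff.mp (show g (y : C) = 1 from y.2)
    · exact MonoidHom.mem_ker.mpr (Subtype.ext ((mem_Om p).mp x.2.1))
    · exact Subtype.ext (Subtype.ext rfl)
    · rfl
  have hrf : Nat.card f.range = Nat.card {q : Qt p // qAut p t q = q} := by
    apply Nat.card_congr
    apply Equiv.subtypeEquivRight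
    intro q
    rw [MonoidHom.mem_range]
    constructor
    · rintro ⟨x, rfl⟩
      rw [hfapp, qAut_mk, (memC _).mp x.2]
    · intro hq
      obtain ⟨y, rfl⟩ := QuotientGroup.mk_surjective q
      rw [qAut_mk, QuotientGroup.eq] at hq
      have hyv : t y * y⁻¹ ∈ V p := by
        have := inv_mem hq
        rwa [mul_inv, inv_inv] at this
      obtain ⟨e, he, hev⟩ := avg_A p t hmn hyv
      refine ⟨⟨e, (memC e).mpr he⟩, ?_⟩
      rw [hfapp]
      rw [QuotientGroup.eq]
      have := inv_mem hev
      rwa [mul_inv, inv_inv] at this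
  haveI : Finite (DD p) := by infer_instance
  have hpos : 0 < Nat.card f.ker := Nat.card_pos
  rw [← hkg, ← hrf]
  rw [hrg] at e2
  exact Nat.eq_of_mul_eq_mul_left hpos ((e2.symm.trans e1).trans (mul_comm _ _))

theorem key_count {G X Y : Type*} [Group G] [Finite G] [MulAction G X] [MulAction G Y]
    [Finite X] [Finite Y]
    (h : ∀ g : G, Nat.card (MulAction.fixedBy X g) = Nat.card (MulAction.fixedBy Y g)) :
    Nat.card (Quotient (MulAction.orbitRel G X))
      = Nat.card (Quotient (MulAction.orbitRel G Y)) := by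
  classical
  cases nonempty_fintype G
  cases nonempty_fintype X
  cases nonempty_fintype Y
  haveI : ∀ a : G, Fintype (MulAction.fixedBy X a) := fun a => Fintype.ofFinite _
  haveI : ∀ a : G, Fintype (MulAction.fixedBy Y a) := fun a => Fintype.ofFinite _
  haveI : Fintype (Quotient (MulAction.orbitRel G X)) := Fintype.ofFinite _
  haveI : Fintype (Quotient (MulAction.orbitRel G Y)) := Fintype.ofFinite _
  have bX := MulAction.sum_card_fixedBy_eq_card_orbits_mul_card_group G X
  have bY := MulAction.sum_card_fixedBy_eq_card_orbits_mul_card_group G Y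
  have hsum : (∑ a : G, Fintype.card (MulAction.fixedBy X a))
      = ∑ a : G, Fintype.card (MulAction.fixedBy Y a) :=
    Finset.sum_congr rfl fun g _ => by
      rw [← Nat.card_eq_fintype_card, ← Nat.card_eq_fintype_card, h g]
  rw [bX, bY] at hsum
  have hq := Nat.eq_of_mul_eq_mul_right Fintype.card_pos hsum
  rw [Nat.card_eq_fintype_card, Nat.card_eq_fintype_card, hq]

theorem quot_card_eq {G X : Type*} [Group G] [MulAction G X] :
    Nat.card (Quotient (MulAction.orbitRel G X))
      = Set.ncard (Set.range fun x : X => MulAction.orbit G x) := by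
  rw [← Nat.card_coe_set_eq]
  apply Nat.card_congr
  refine Equiv.ofBijective (fun q => Quotient.liftOn q
    (fun x => (⟨MulAction.orbit G x, Set.mem_range_self x⟩ :
      Set.range fun x : X => MulAction.orbit G x))
    fun a b hab => Subtype.ext (MulAction.orbit_eq_iff.mpr
      ((MulAction.orbitRel_apply).mp hab))) ⟨?_, ?_⟩
  · intro q1 q2
    induction q1 using Quotient.inductionOn
    induction q2 using Quotient.inductionOn
    intro hv
    exact Quotient.sound ((MulAction.orbitRel_apply).mpr
      (MulAction.orbit_eq_iff.mp (Subtype.ext_iff.mp hv)))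
  · rintro ⟨s, x, rfl⟩
    exact ⟨⟦x⟧, rfl⟩

theorem ncard_image_split {X : Type*} [Finite X] (K : X → Set X) (S : Set X)
    (hmem : ∀ x, x ∈ K x)
    (hinv : ∀ x y, K x = K y → (x ∈ S ↔ y ∈ S)) :
    Set.ncard (K '' Set.univ) = Set.ncard (K '' S) + Set.ncard (K '' Sᶜ) := by
  have hd : Disjoint (K '' S) (K '' Sᶜ) := by
    rw [Set.disjoint_left]
    rintro s ⟨x, hx, rfl⟩ ⟨y, hy, hxy⟩
    exact hy ((hinv x y hxy.symm).mp hx)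
  rw [← Set.union_compl_self S, Set.image_union]
  exact Set.ncard_union_eq hd (S.toFinite.image K) (Sᶜ.toFinite.image K)

section actions

variable (T : Subgroup (MulAut (DD p)))

instance omAction : MulAction T {x : DD p // x ∈ Om p} where
  smul t x := ⟨t.val x.val, apply_mem_Om p t.val x.2⟩
  one_smul x := Subtype.ext rfl
  mul_smul t s x := Subtype.ext rfl

instance qAction : MulAction T (Qt p) where
  smul t q := qAut p t.val q
  one_smul q := qAut_one p q
  mul_smul t s q := qAut_mul p t.val s.val q

def orbD (x : DD p) : Set (DD p) := {z | ∃ t ∈ T, t z = x}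

def orbQ (q : Qt p) : Set (Qt p) := {r | ∃ t ∈ T, qAut p t r = q}

theorem mem_orbD_self (x : DD p) : x ∈ orbD p T x := ⟨1, T.one_mem, rfl⟩

theorem mem_orbQ_self (q : Qt p) : q ∈ orbQ p T q := ⟨1, T.one_mem, qAut_one p q⟩

theorem orbD_eq (x : DD p) : orbD p T x = MulAction.orbit T x := by
  ext z
  rw [MulAction.mem_orbit_iff]
  constructor
  · rintro ⟨t, ht, htz⟩
    refine ⟨(⟨t, ht⟩ : T)⁻¹, ?_⟩
    show t⁻¹ x = z
    rw [← htz]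
    exact t.symm_apply_apply z
  · rintro ⟨g, rfl⟩
    refine ⟨(g : MulAut (DD p))⁻¹, inv_mem g.2, ?_⟩
    show (g : MulAut (DD p))⁻¹ ((g : MulAut (DD p)) x) = x
    exact (g : MulAut (DD p)).symm_apply_apply x

theorem orbQ_eq (q : Qt p) : orbQ p T q = MulAction.orbit T q := by
  ext z
  rw [MulAction.mem_orbit_iff]
  constructor
  · rintro ⟨t, ht, htz⟩
    refine ⟨(⟨t, ht⟩ : T)⁻¹, ?_⟩
    show qAut p t⁻¹ q = z
    rw [← htz, qAut_inv_apply]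
  · rintro ⟨g, rfl⟩
    refine ⟨(g : MulAut (DD p))⁻¹, inv_mem g.2, ?_⟩
    show qAut p (g : MulAut (DD p))⁻¹ (qAut p (g : MulAut (DD p)) q) = q
    rw [qAut_inv_apply]

theorem coe_orbit_omAction (x : {x : DD p // x ∈ Om p}) :
    Subtype.val '' (MulAction.orbit T x) = orbD p T (x : DD p) := by
  ext z
  constructor
  · rintro ⟨w, hw, rfl⟩
    obtain ⟨g, rfl⟩ := MulAction.mem_orbit_iff.mp hw
    refine ⟨(g : MulAut (DD p))⁻¹, inv_mem g.2, ?_⟩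
    show (g : MulAut (DD p))⁻¹ ((g : MulAut (DD p)) x.val) = x.val
    exact (g : MulAut (DD p)).symm_apply_apply x.val
  · rintro ⟨t, ht, htz⟩
    refine ⟨(⟨t, ht⟩ : T)⁻¹ • x, MulAction.mem_orbit _ _, ?_⟩
    show t⁻¹ (x : DD p) = z
    rw [← htz]
    exact t.symm_apply_apply z

theorem fix_a (g : T) : Nat.card (MulAction.fixedBy {x : DD p // x ∈ Om p} g)
    = Nat.card {x : DD p // x ∈ Om p ∧ (g : MulAut (DD p)) x = x} := by
  apply Nat.card_congr
  refine ⟨fun y => ⟨y.1.1, y.1.2, ?_⟩, fun x => ⟨⟨x.1, x.2.1⟩, ?_⟩, fun y => ?_, fun x => ?_⟩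
  · exact congrArg Subtype.val y.2
  · exact Subtype.ext x.2.2
  · exact Subtype.ext (Subtype.ext rfl)
  · rfl

theorem fix_b (g : T) : Nat.card (MulAction.fixedBy (Qt p) g)
    = Nat.card {q : Qt p // qAut p (g : MulAut (DD p)) q = q} :=
  Nat.card_congr (Equiv.subtypeEquivRight fun _ => Iff.rfl)

end actions

theorem zpow_split (x : DD p) (k : ℤ) : x ^ ((1 : ℤ) + k * p) = x * (x ^ k) ^ p := by
  rw [zpow_add, zpow_one, zpow_mul, zpow_natCast]

theorem rel_of_V (hp : p.Prime) {x y : DD p} (hx : x ∉ Om p) (hv : y * x⁻¹ ∈ V p) :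
    ∃ k : ℤ, y = x ^ ((1 : ℤ) + k * p) := by
  obtain ⟨k, hk⟩ := V_zpow p hp hx hv
  refine ⟨k, ?_⟩
  have h1 : y = (y * x⁻¹) * x := by group
  rw [h1, hk]
  have h2 := (zpow_add x ((p : ℤ) * k) 1).symm
  rw [zpow_one] at h2
  rw [h2]
  congr 1
  ring

theorem mk_zpow_eq (x : DD p) (k : ℤ) :
    (QuotientGroup.mk (x ^ ((1 : ℤ) + k * p)) : Qt p) = QuotientGroup.mk x := by
  rw [zpow_split]
  have hone : (QuotientGroup.mk ((x ^ k) ^ p) : Qt p) = 1 :=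
    (QuotientGroup.eq_one_iff _).mpr ((mem_V p).mpr ⟨x ^ k, rfl⟩)
  rw [QuotientGroup.mk_mul, hone, mul_one]

section withT2

variable (T : Subgroup (MulAut (DD p)))

theorem mk_cls (hp : p.Prime) {x : DD p} (hx : x ∉ Om p) :
    (QuotientGroup.mk : DD p → Qt p) '' (cls p T x) = orbQ p T (QuotientGroup.mk x) := by
  ext w
  constructor
  · rintro ⟨z, ⟨t, ht, k, htz⟩, rfl⟩
    exact ⟨t, ht, by rw [qAut_mk, htz, mk_zpow_eq]⟩
  · rintro ⟨t, ht, hq⟩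
    obtain ⟨z, rfl⟩ := QuotientGroup.mk_surjective w
    rw [qAut_mk, QuotientGroup.eq] at hq
    have hv : t z * x⁻¹ ∈ V p := by
      have := inv_mem hq
      rwa [mul_inv, inv_inv] at this
    obtain ⟨k, hk⟩ := rel_of_V p hp hx hv
    exact ⟨z, ⟨t, ht, k, hk⟩, rfl⟩

theorem mk_mem_iff (x : DD p) :
    (QuotientGroup.mk x : Qt p) ∈ (QuotientGroup.mk : DD p → Qt p) '' (Om p : Set (DD p))
      ↔ x ∈ Om p := by
  constructor
  · rintro ⟨y, hy, hmk⟩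
    rw [QuotientGroup.eq] at hmk
    have hxe : x = y * (y⁻¹ * x) := by group
    rw [hxe]
    exact mul_mem hy (V_le_Om p hmk)
  · intro hx
    exact ⟨x, hx, rfl⟩

end withT2

end Stmt4Aux

open Stmt4Aux in
theorem stmt_4 (p : ℕ) (hp : p.Prime)
    (T : Subgroup (MulAut (Multiplicative (ZMod (p ^ 2) × ZMod p × ZMod p))))
    (hT : (Nat.card T).Coprime p) :
    Set.ncard {s : Set (Multiplicative (ZMod (p ^ 2) × ZMod p × ZMod p)) |
        ∃ x, orderOf x = p ∧
          s = {z | ∃ t ∈ T, ∃ k : ℤ, t z = x ^ ((1 : ℤ) + k * p)}} >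
    Set.ncard {s : Set (Multiplicative (ZMod (p ^ 2) × ZMod p × ZMod p)) |
        ∃ x, orderOf x = p ^ 2 ∧
          s = {z | ∃ t ∈ T, ∃ k : ℤ, t z = x ^ ((1 : ℤ) + k * p)}} := by
  haveI : NeZero p := ⟨hp.pos.ne'⟩
  haveI : NeZero (p ^ 2) := ⟨pow_ne_zero 2 hp.pos.ne'⟩
  classical
  set E1 : Set (DD p) := (Om p : Set (DD p)) \ {1} with hE1
  set E2 : Set (DD p) := {x | x ∉ Om p} with hE2
  set S : Set (Qt p) := (QuotientGroup.mk : DD p → Qt p) '' (Om p : Set (DD p)) with hS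
  have hL : {s : Set (DD p) | ∃ x, orderOf x = p ∧
      s = {z | ∃ t ∈ T, ∃ k : ℤ, t z = x ^ ((1 : ℤ) + k * p)}}
      = orbD p T '' E1 := by
    ext s
    simp only [Set.mem_setOf_eq, Set.mem_image]
    constructor
    · rintro ⟨x, hx, rfl⟩
      obtain ⟨h1, h2⟩ := (ord_p_iff p hp x).mp hx
      exact ⟨x, ⟨h1, h2⟩, (cls_of_mem_Om p T h1).symm⟩
    · rintro ⟨x, ⟨h1, h2⟩, rfl⟩
      exact ⟨x, (ord_p_iff p hp x).mpr ⟨h1, h2⟩, (cls_of_mem_Om p T h1).symm⟩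
  have hRset : {s : Set (DD p) | ∃ x, orderOf x = p ^ 2 ∧
      s = {z | ∃ t ∈ T, ∃ k : ℤ, t z = x ^ ((1 : ℤ) + k * p)}}
      = cls p T '' E2 := by
    ext s
    simp only [Set.mem_setOf_eq, Set.mem_image]
    constructor
    · rintro ⟨x, hx, rfl⟩
      exact ⟨x, (ord_p2_iff p hp x).mp hx, rfl⟩
    · rintro ⟨x, hx, rfl⟩
      exact ⟨x, (ord_p2_iff p hp x).mpr hx, rfl⟩
  have hinj : Set.InjOn (Set.image (QuotientGroup.mk : DD p → Qt p)) (cls p T '' E2) := by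
    rintro s1 ⟨x, hx, rfl⟩ s2 ⟨y, hy, rfl⟩ himg
    rw [mk_cls p T hp hx, mk_cls p T hp hy] at himg
    have hmem : (QuotientGroup.mk y : Qt p) ∈ orbQ p T (QuotientGroup.mk x) :=
      himg ▸ mem_orbQ_self p T _
    obtain ⟨t, ht, hq⟩ := hmem
    rw [qAut_mk, QuotientGroup.eq] at hq
    have hv : t y * x⁻¹ ∈ V p := by
      have := inv_mem hq
      rwa [mul_inv, inv_inv] at this
    obtain ⟨k, hk⟩ := rel_of_V p hp hx hv
    exact cls_eq p T ht k hk
  have himg2 : Set.image (QuotientGroup.mk : DD p → Qt p) '' (cls p T '' E2)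
      = orbQ p T '' Sᶜ := by
    ext w
    constructor
    · rintro ⟨s, ⟨x, hx, rfl⟩, rfl⟩
      refine ⟨QuotientGroup.mk x, ?_, (mk_cls p T hp hx).symm⟩
      intro hmem
      exact hx ((mk_mem_iff p x).mp hmem)
    · rintro ⟨w0, hw0, rfl⟩
      obtain ⟨x, rfl⟩ := QuotientGroup.mk_surjective w0
      have hx : x ∉ Om p := fun h => hw0 ((mk_mem_iff p x).mpr h)
      exact ⟨cls p T x, ⟨x, hx, rfl⟩, mk_cls p T hp hx⟩
  have hOm_split : Set.ncard (orbD p T '' (Om p : Set (DD p)))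
      = Set.ncard (orbD p T '' E1) + 1 := by
    have h1 : (Om p : Set (DD p)) = insert 1 E1 := by
      rw [hE1, Set.insert_diff_singleton, Set.insert_eq_self.mpr (Om p).one_mem]
    have hnot : orbD p T 1 ∉ orbD p T '' E1 := by
      rintro ⟨x, ⟨hx1, hx2⟩, heq⟩
      apply hx2
      have hxo : x ∈ orbD p T 1 := heq ▸ mem_orbD_self p T x
      obtain ⟨t, ht, htx⟩ := hxo
      exact t.injective (htx.trans (map_one t).symm)
    rw [h1, Set.image_insert_eq, Set.ncard_insert_of_notMem hnot (E1.toFinite.image _)]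
  have burn : Set.ncard (orbD p T '' (Om p : Set (DD p)))
      = Set.ncard (orbQ p T '' Set.univ) := by
    have b1 : Set.ncard (Set.range fun x : {x : DD p // x ∈ Om p} => MulAction.orbit T x)
        = Set.ncard (orbD p T '' (Om p : Set (DD p))) := by
      have himg : (Set.image (Subtype.val : {x : DD p // x ∈ Om p} → DD p))
            '' (Set.range fun x => MulAction.orbit T x)
          = orbD p T '' (Om p : Set (DD p)) := by
        rw [← Set.range_comp]
        have hfun : ((Set.image Subtype.val) ∘ fun x : {x : DD p // x ∈ Om p} =>
            MulAction.orbit T x) = fun x : {x : DD p // x ∈ Om p} => orbD p T (x : DD p) :=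
          funext fun x => coe_orbit_omAction p T x
        rw [hfun]
        ext s
        constructor
        · rintro ⟨x, rfl⟩
          exact ⟨x.1, x.2, rfl⟩
        · rintro ⟨x, hx, rfl⟩
          exact ⟨⟨x, hx⟩, rfl⟩
      rw [← himg, Set.ncard_image_of_injective _ (Set.image_injective.mpr Subtype.val_injective)]
    have b2 : Set.ncard (Set.range fun q : Qt p => MulAction.orbit T q)
        = Set.ncard (orbQ p T '' Set.univ) := by
      have hfun : (fun q : Qt p => MulAction.orbit T q) = orbQ p T :=
        funext fun q => (orbQ_eq p T q).symm
      rw [hfun, ← Set.image_univ]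
    rw [← b1, ← b2, ← quot_card_eq, ← quot_card_eq]
    apply key_count
    intro g
    rw [fix_a, fix_b]
    apply core p hp
    rw [Subgroup.orderOf_coe g]
    exact Nat.Coprime.coprime_dvd_left (orderOf_dvd_natCard g) hT
  have hsplit : Set.ncard (orbQ p T '' Set.univ)
      = Set.ncard (orbQ p T '' S) + Set.ncard (orbQ p T '' Sᶜ) := by
    apply ncard_image_split (orbQ p T) S (mem_orbQ_self p T)
    have key : ∀ u v : Qt p, orbQ p T u = orbQ p T v → u ∈ S → v ∈ S := by
      intro u v huv hu
      have hvm : v ∈ orbQ p T u := huv ▸ mem_orbQ_self p T v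
      obtain ⟨t, ht, htv⟩ := hvm
      obtain ⟨y, hy, rfl⟩ := hu
      have hv : v = QuotientGroup.mk ((t⁻¹ : MulAut (DD p)) y) :=
        (qAut_inv_apply p t v).symm.trans (by rw [htv, qAut_mk])
      rw [hv]
      exact ⟨t⁻¹ y, apply_mem_Om p t⁻¹ hy, rfl⟩
    exact fun w w' heq => ⟨key w w' heq, key w' w heq.symm⟩
  have htwo : 2 ≤ Set.ncard (orbQ p T '' S) := by
    have hmem1 : orbQ p T (QuotientGroup.mk 1) ∈ orbQ p T '' S :=
      ⟨_, ⟨1, (Om p).one_mem, rfl⟩, rfl⟩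
    have hmem2 : orbQ p T (QuotientGroup.mk (omega0 p)) ∈ orbQ p T '' S :=
      ⟨_, ⟨omega0 p, omega0_mem_Om p, rfl⟩, rfl⟩
    have hne : orbQ p T (QuotientGroup.mk (omega0 p)) ≠ orbQ p T (QuotientGroup.mk 1) := by
      intro heq
      have hmem : (QuotientGroup.mk (omega0 p) : Qt p) ∈ orbQ p T (QuotientGroup.mk 1) :=
        heq ▸ mem_orbQ_self p T _
      obtain ⟨t, ht, htq⟩ := hmem
      rw [qAut_mk] at htq
      have h1 : t (omega0 p) ∈ V p := by
        rw [QuotientGroup.eq, mul_one, inv_mem_iff] at htq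
        exact htq
      have h2 : omega0 p ∈ V p := by
        have := apply_mem_V p t⁻¹ h1
        rwa [show (t⁻¹ : MulAut (DD p)) (t (omega0 p)) = omega0 p from
          t.symm_apply_apply _] at this
      exact omega0_not_mem_V p hp h2
    exact (Set.one_lt_ncard (Set.toFinite _)).mpr ⟨_, hmem2, _, hmem1, hne⟩
  have hRcard : Set.ncard (cls p T '' E2) = Set.ncard (orbQ p T '' Sᶜ) := by
    rw [← himg2, Set.ncard_image_of_injOn hinj]
  rw [hL, hRset, hRcard]
  omega
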